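/- The half-period theta identity: for all complex x, y, θ₄(x|τ/2)·θ₃(y|τ/2) − θ₄(y|τ/2)·θ₃(x|τ/2) = 2·θ₁(x+y|τ)·θ₁(x−y|τ). -/

import Mathlib

open Complex

noncomputable def theta1 (τ z : ℂ) : ℂ :=
  ∑' k : ℤ, Complex.exp (Real.pi * Complex.I * τ * (k + 1/2)^2 +
    2 * Real.pi * Complex.I * (z + 1/2) * (k + 1/2))

noncomputable def theta2 (τ z : ℂ) : ℂ :=
  ∑' k : ℤ, Complex.exp (Real.pi * Complex.I * τ * (k + 1/2)^2 +
    2 * Real.pi * Complex.I * z * (k + 1/2))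

noncomputable def theta3 (τ z : ℂ) : ℂ :=
  ∑' k : ℤ, Complex.exp (Real.pi * Complex.I * τ * k^2 +
    2 * Real.pi * Complex.I * z * k)

noncomputable def theta4 (τ z : ℂ) : ℂ :=
  ∑' k : ℤ, Complex.exp (Real.pi * Complex.I * τ * k^2 +
    2 * Real.pi * Complex.I * (z + 1/2) * k)

lemma sumnorm (τ z : ℂ) (hτ : 0 < τ.im) :
    Summable (fun n : ℤ => ‖Complex.exp (Real.pi * Complex.I * τ * n^2 +
      2 * Real.pi * Complex.I * z * n)‖) := by
  have h := (summable_jacobiTheta₂_term_iff z τ).mpr hτ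
  rw [← summable_norm_iff] at h
  convert h using 2 with n
  unfold jacobiTheta₂_term
  congr 1
  ring_nf

lemma sumnorm1 (τ z : ℂ) (hτ : 0 < τ.im) :
    Summable (fun k : ℤ => ‖Complex.exp (Real.pi * Complex.I * τ * (k + 1/2)^2 +
      2 * Real.pi * Complex.I * (z + 1/2) * (k + 1/2))‖) := by
  have h := (sumnorm τ (z + 1/2 + τ/2) hτ).mul_left
    ‖Complex.exp (Real.pi * Complex.I * τ / 4 + Real.pi * Complex.I * (z + 1/2))‖
  convert h using 2 with k
  · rfl
  rw [← norm_mul, ← Complex.exp_add]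
  congr 1
  ring_nf

lemma exp_odd_shift (w : ℂ) (b : ℤ) :
    Complex.exp (w + ((-(b:ℂ) - 1) * (2 * Real.pi * Complex.I) + Real.pi * Complex.I))
      = - Complex.exp w := by
  have h2 : ((-b - 1 : ℤ) : ℂ) = -(b:ℂ) - 1 := by push_cast; ring
  rw [Complex.exp_add, Complex.exp_add, Complex.exp_pi_mul_I, ← h2,
    Complex.exp_int_mul_two_pi_mul_I]
  ring

theorem half_period_theta_identity_minus (τ : ℂ) (hτ : 0 < τ.im) (x y : ℂ) :
    theta4 (τ/2) x * theta3 (τ/2) y - theta4 (τ/2) y * theta3 (τ/2) x =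
      2 * theta1 τ (x + y) * theta1 τ (x - y) := by
  have hτ2 : 0 < (τ/2).im := by simp [Complex.div_im]; positivity
  set T3 : ℂ → ℤ → ℂ := fun z n => Complex.exp (Real.pi * Complex.I * (τ/2) * n^2 +
    2 * Real.pi * Complex.I * z * n) with hT3
  set T1 : ℂ → ℤ → ℂ := fun z k => Complex.exp (Real.pi * Complex.I * τ * (k + 1/2)^2 +
    2 * Real.pi * Complex.I * (z + 1/2) * (k + 1/2)) with hT1
  have h3 : ∀ z, theta3 (τ/2) z = ∑' n : ℤ, T3 z n := fun z => rfl
  have h4 : ∀ z, theta4 (τ/2) z = ∑' n : ℤ, T3 (z + 1/2) n := fun z => rfl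
  have h1 : ∀ z, theta1 τ z = ∑' k : ℤ, T1 z k := fun z => rfl
  have S3 : ∀ z, Summable (fun n : ℤ => ‖T3 z n‖) := fun z => sumnorm (τ/2) z hτ2
  have S1 : ∀ z, Summable (fun k : ℤ => ‖T1 z k‖) := fun z => sumnorm1 τ z hτ
  have P1 : theta4 (τ/2) x * theta3 (τ/2) y
      = ∑' p : ℤ × ℤ, T3 (x + 1/2) p.1 * T3 y p.2 := by
    rw [h4, h3]; exact tsum_mul_tsum_of_summable_norm (S3 _) (S3 _)
  have P2 : theta4 (τ/2) y * theta3 (τ/2) x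
      = ∑' p : ℤ × ℤ, T3 (y + 1/2) p.2 * T3 x p.1 := by
    rw [h4, h3, tsum_mul_tsum_of_summable_norm (S3 _) (S3 _)]
    exact ((Equiv.prodComm ℤ ℤ).tsum_eq _).symm
  set g : ℤ × ℤ → ℂ := fun p => T3 (x + 1/2) p.1 * T3 y p.2 - T3 (y + 1/2) p.2 * T3 x p.1
    with hg
  have sum1 : Summable (fun p : ℤ × ℤ => T3 (x + 1/2) p.1 * T3 y p.2) :=
    ((S3 _).mul_norm (S3 _)).of_norm
  have sum2 : Summable (fun p : ℤ × ℤ => T3 (y + 1/2) p.2 * T3 x p.1) := by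
    apply Summable.of_norm
    exact ((Equiv.prodComm ℤ ℤ).summable_iff).mpr ((S3 (y + 1/2)).mul_norm (S3 x))
  have hdiff : theta4 (τ/2) x * theta3 (τ/2) y - theta4 (τ/2) y * theta3 (τ/2) x
      = ∑' p : ℤ × ℤ, g p := by
    rw [P1, P2]; exact (Summable.tsum_sub sum1 sum2).symm
  set φ : ℤ × ℤ → ℤ × ℤ := fun q => (q.1 + q.2 + 1, q.1 - q.2) with hφ
  have hinj : Function.Injective φ := by
    intro a b h
    simp only [hφ, Prod.mk.injEq, Prod.ext_iff] at h ⊢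
    omega
  have hsupp : Function.support g ⊆ Set.range φ := by
    intro p hp
    rcases Int.even_or_odd (p.1 - p.2) with ⟨c, hc⟩ | ⟨c, hc⟩
    · exfalso
      apply hp
      have hcc : (p.1 : ℂ) - (p.2 : ℂ) = (c : ℂ) + (c : ℂ) := by exact_mod_cast hc
      simp only [hg, hT3, ← Complex.exp_add]
      rw [sub_eq_zero, Complex.exp_eq_exp_iff_exists_int]
      refine ⟨c, ?_⟩
      have hp1 : (p.1 : ℂ) = (p.2 : ℂ) + (c : ℂ) + (c : ℂ) := by
        exact_mod_cast (by omega : p.1 = p.2 + c + c)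
      rw [hp1]; ring
    · exact ⟨(p.2 + c, c), by simp only [hφ, Prod.ext_iff]; constructor <;> omega⟩
  have key : ∑' p : ℤ × ℤ, g p = ∑' q : ℤ × ℤ, g (φ q) := (hinj.tsum_eq hsupp).symm
  have hterm : ∀ q : ℤ × ℤ, g (φ q) = 2 * (T1 (x + y) q.1 * T1 (x - y) q.2) := by
    intro ⟨a, b⟩
    simp only [hg, hφ, hT3, hT1, ← Complex.exp_add]
    push_cast
    have e1 : Real.pi * Complex.I * (τ/2) * ((a:ℂ) + b + 1)^2 +
        2 * Real.pi * Complex.I * (x + 1/2) * ((a:ℂ) + b + 1) +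
        (Real.pi * Complex.I * (τ/2) * ((a:ℂ) - b)^2 +
        2 * Real.pi * Complex.I * y * ((a:ℂ) - b))
      = (Real.pi * Complex.I * τ * ((a:ℂ) + 1/2)^2 +
        2 * Real.pi * Complex.I * (x + y + 1/2) * ((a:ℂ) + 1/2)) +
        (Real.pi * Complex.I * τ * ((b:ℂ) + 1/2)^2 +
        2 * Real.pi * Complex.I * (x - y + 1/2) * ((b:ℂ) + 1/2)) := by ring
    have e2 : Real.pi * Complex.I * (τ/2) * ((a:ℂ) - b)^2 +
        2 * Real.pi * Complex.I * (y + 1/2) * ((a:ℂ) - b) +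
        (Real.pi * Complex.I * (τ/2) * ((a:ℂ) + b + 1)^2 +
        2 * Real.pi * Complex.I * x * ((a:ℂ) + b + 1))
      = ((Real.pi * Complex.I * τ * ((a:ℂ) + 1/2)^2 +
        2 * Real.pi * Complex.I * (x + y + 1/2) * ((a:ℂ) + 1/2)) +
        (Real.pi * Complex.I * τ * ((b:ℂ) + 1/2)^2 +
        2 * Real.pi * Complex.I * (x - y + 1/2) * ((b:ℂ) + 1/2)))
        + ((-(b:ℂ) - 1) * (2 * Real.pi * Complex.I) + Real.pi * Complex.I) := by ring
    rw [e1, e2, exp_odd_shift]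
    ring
  rw [hdiff, key, tsum_congr hterm, h1, h1]
  have hA : Summable (fun k : ℤ => ‖2 * T1 (x + y) k‖) := by
    simpa [norm_mul] using (S1 (x + y)).mul_left 2
  have Hprod := tsum_mul_tsum_of_summable_norm hA (S1 (x - y))
  rw [tsum_mul_left] at Hprod
  rw [Hprod]
  exact tsum_congr fun q => by ring
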